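/- Under the dependence assumption (conditional rejection probability at most α_j under true nulls and at most ρ̄_j under false nulls), any Generalized Alpha Investing procedure controls mFDR_η at level α: for every m, E(V(m))/(E(R(m)) + η) ≤ α. -/

import Mathlib

open MeasureTheory

/-- The event that the rejection history of the first `j-1` tests equals the
outcome pattern `r` (rejection indicators take values in `{0,1}`). -/
def histEvent {Ω : Type*} (R : ℕ → Ω → ℝ) (j : ℕ) (r : ℕ → Bool) : Set Ω :=
  {ω | ∀ i, 1 ≤ i → i < j → R i ω = if r i then 1 else 0}

lemma histEvent_eq {Ω : Type*} (R : ℕ → Ω → ℝ) (j : ℕ) (r : ℕ → Bool) :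
    histEvent R j r = ⋂ i ∈ Finset.Ico 1 j, (R i) ⁻¹' {if r i then (1:ℝ) else 0} := by
  ext ω
  simp only [histEvent, Set.mem_setOf_eq, Set.mem_iInter, Finset.mem_Ico, Set.mem_preimage,
    Set.mem_singleton_iff]
  tauto

lemma histEvent_measurableSet {Ω : Type*} [MeasurableSpace Ω] {R : ℕ → Ω → ℝ}
    (hR : ∀ i, Measurable (R i)) (j : ℕ) (r : ℕ → Bool) :
    MeasurableSet (histEvent R j r) := by
  rw [histEvent_eq]
  exact Finset.measurableSet_biInter _ fun i _ => (hR i) (measurableSet_singleton _)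

lemma key_ineq (κ φ ψ α' m1 mE : ℝ) (hκ0 : 0 < κ) (hφ : 0 ≤ φ)
    (hψ : ψ ≤ φ / κ + α') (hm1 : 0 ≤ m1) (hm : m1 ≤ κ * mE) :
    0 ≤ (α' - ψ) * m1 + φ * mE := by
  have hmE : 0 ≤ mE := nonneg_of_mul_nonneg_right (hm1.trans hm) hκ0
  have hψ' : κ * ψ ≤ φ + κ * α' := by
    have := mul_le_mul_of_nonneg_left hψ hκ0.le
    rw [mul_add, mul_div_cancel₀ _ hκ0.ne'] at this
    linarith
  rcases le_or_gt 0 (α' - ψ) with hc | hc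
  · have h1 := mul_nonneg hc hm1
    have h2 := mul_nonneg hφ hmE
    linarith
  · have h1 : (α' - ψ) * (κ * mE) ≤ (α' - ψ) * m1 :=
      mul_le_mul_of_nonpos_left hm hc.le
    nlinarith

/-- Under the dependence assumption (conditional rejection probability at most
`α_j` for true nulls and at most `ρ̄_j` for false nulls, given any rejection
history), any Generalized Alpha Investing procedure controls `mFDR_η` at level
`α`: for every `m`, `E(V(m)) / (E(R(m)) + η) ≤ α`. -/
theorem gai_controls_mfdr
    {Ω : Type*} [MeasurableSpace Ω] (μ : Measure Ω) [IsProbabilityMeasure μ]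
    (α η : ℝ) (hα0 : 0 < α) (hα1 : α < 1) (hη : 0 < η)
    (R V : ℕ → Ω → ℝ) (W : ℕ → Ω → ℝ)
    (isNull : ℕ → Bool)
    (Φ Ψ A : ℕ → (ℕ → Bool) → ℝ) (ρ : ℕ → ℝ)
    (hRmeas : ∀ i, Measurable (R i))
    (hR01 : ∀ i ω, R i ω = 0 ∨ R i ω = 1)
    (hV : ∀ i ω, V i ω = if isNull i then R i ω else 0)
    (hA : ∀ j rr, 0 < A j rr ∧ A j rr < 1)
    (hρ : ∀ j, 0 < ρ j ∧ ρ j ≤ 1)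
    (hΦ : ∀ j rr, 0 ≤ Φ j rr)
    (hΨ : ∀ j rr, 0 ≤ Ψ j rr ∧
      Ψ j rr ≤ min (Φ j rr / ρ j + α) (Φ j rr / A j rr + α - 1))
    (hW0 : ∀ ω, W 0 ω = α * η)
    (hWupd : ∀ j, 1 ≤ j → ∀ rr : ℕ → Bool, ∀ ω ∈ histEvent R j rr,
      W j ω = W (j - 1) ω - Φ j rr + R j ω * Ψ j rr)
    (hWnn : ∀ j ω, 0 ≤ W j ω)
    (hWint : ∀ j, Integrable (W j) μ)
    (hcondNull : ∀ j, 1 ≤ j → isNull j = true → ∀ rr : ℕ → Bool,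
      μ ({ω | R j ω = 1} ∩ histEvent R j rr) ≤
        ENNReal.ofReal (A j rr) * μ (histEvent R j rr))
    (hcondAlt : ∀ j, 1 ≤ j → isNull j = false → ∀ rr : ℕ → Bool,
      μ ({ω | R j ω = 1} ∩ histEvent R j rr) ≤
        ENNReal.ofReal (ρ j) * μ (histEvent R j rr)) :
    ∀ m : ℕ,
      (∫ ω, (∑ i ∈ Finset.Icc 1 m, V i ω) ∂μ) /
          ((∫ ω, (∑ i ∈ Finset.Icc 1 m, R i ω) ∂μ) + η) ≤ α := by
  -- basic facts
  have hRnn : ∀ i ω, 0 ≤ R i ω := by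
    intro i ω; rcases hR01 i ω with h | h <;> simp [h]
  have hRsetmeas : ∀ i, MeasurableSet {ω | R i ω = 1} := fun i =>
    (hRmeas i) (measurableSet_singleton 1)
  have hRind : ∀ i, R i = Set.indicator {ω | R i ω = 1} (fun _ => (1:ℝ)) := by
    intro i; funext ω
    rcases hR01 i ω with h | h
    · simp [Set.indicator, h]
    · simp [Set.indicator, h]
  have hRint : ∀ i, Integrable (R i) μ := by
    intro i
    rw [hRind i]
    exact (integrable_const (1:ℝ)).indicator (hRsetmeas i)
  have hVeq : ∀ i, V i = fun ω => if isNull i then R i ω else 0 := by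
    intro i; funext ω; exact hV i ω
  have hVint : ∀ i, Integrable (V i) μ := by
    intro i
    rw [hVeq i]
    cases h : isNull i
    · simp only [h, if_neg Bool.false_ne_true]
      exact integrable_const 0
    · simpa only [h, if_true] using hRint i
  -- the step function
  set f : ℕ → Ω → ℝ := fun j ω => α * R j ω - V j ω + (W (j - 1) ω - W j ω) with hf
  have hfint : ∀ j, Integrable (f j) μ :=
    fun j => (((hRint j).const_mul α).sub (hVint j)).add ((hWint (j-1)).sub (hWint j))
  -- the key step inequality
  have hstep : ∀ j, 1 ≤ j → 0 ≤ ∫ ω, f j ω ∂μ := by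
    intro j hj
    -- patterns
    set I := Finset.Ico 1 j with hI
    set ext : ({i // i ∈ I} → Bool) → (ℕ → Bool) := fun v i =>
      if h : i ∈ I then v ⟨i, h⟩ else false with hext
    set E : ({i // i ∈ I} → Bool) → Set Ω := fun v => histEvent R j (ext v) with hE
    have hEmeas : ∀ v, MeasurableSet (E v) := fun v => histEvent_measurableSet hRmeas j _
    -- the events partition Ω
    have hunion : (⋃ v ∈ (Finset.univ : Finset ({i // i ∈ I} → Bool)), E v) = Set.univ := by
      ext ω
      simp only [Set.mem_iUnion, Finset.mem_univ, Set.mem_univ, iff_true, exists_prop,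
        true_and]
      refine ⟨fun i => decide (R i.1 ω = 1), ?_⟩
      intro i h1 h2
      have hi : i ∈ I := Finset.mem_Ico.mpr ⟨h1, h2⟩
      simp only [hext, dif_pos hi]
      rcases hR01 i ω with h | h
      · have hne : ¬ (R i ω = 1) := by rw [h]; norm_num
        simp [hne, h]
      · simp [h]
    have hdisj : (↑(Finset.univ : Finset ({i // i ∈ I} → Bool)) : Set _).Pairwise
        (Function.onFun Disjoint E) := by
      intro v _ w _ hvw
      rw [Function.onFun, Set.disjoint_left]
      intro ω hv hw
      obtain ⟨i, hi⟩ := Function.ne_iff.mp hvw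
      have hmem : 1 ≤ i.1 ∧ i.1 < j := Finset.mem_Ico.mp i.2
      have h1 := hv i.1 hmem.1 hmem.2
      have h2 := hw i.1 hmem.1 hmem.2
      simp only [hext, dif_pos i.2] at h1 h2
      cases hvi : v i <;> cases hwi : w i
      · exact hi (hvi.trans hwi.symm)
      · rw [hvi] at h1; rw [hwi] at h2
        simp only [if_true, if_neg Bool.false_ne_true] at h1 h2
        rw [h1] at h2; norm_num at h2
      · rw [hvi] at h1; rw [hwi] at h2
        simp only [if_true, if_neg Bool.false_ne_true] at h1 h2
        rw [h1] at h2; norm_num at h2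
      · exact hi (hvi.trans hwi.symm)
    -- decompose the integral
    have hsplit : ∫ ω, f j ω ∂μ = ∑ v : {i // i ∈ I} → Bool, ∫ ω in E v, f j ω ∂μ := by
      rw [← setIntegral_univ, ← hunion]
      exact integral_biUnion_finset _ (fun v _ => hEmeas v) hdisj
        (fun v _ => (hfint j).integrableOn)
    rw [hsplit]
    apply Finset.sum_nonneg
    intro v _
    set rr := ext v with hrr
    have hμEfin : μ (E v) ≠ ⊤ := (measure_lt_top μ _).ne
    set mE := (μ (E v)).toReal with hmE
    set m1 := (μ ({ω | R j ω = 1} ∩ E v)).toReal with hm1def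
    have hm1nn : (0:ℝ) ≤ m1 := ENNReal.toReal_nonneg
    have hintR : ∫ ω in E v, R j ω ∂μ = m1 := by
      conv_lhs => rw [hRind j]
      rw [setIntegral_indicator (hRsetmeas j), setIntegral_const, Set.inter_comm]
      simp [hm1def, measureReal_def]
    -- unified case analysis
    obtain ⟨κ, α', hκ0, hμle, hψle, hfeq⟩ :
        ∃ κ α', 0 < κ ∧
          μ ({ω | R j ω = 1} ∩ E v) ≤ ENNReal.ofReal κ * μ (E v) ∧
          Ψ j rr ≤ Φ j rr / κ + α' ∧
          (∀ ω ∈ E v, f j ω = (α' - Ψ j rr) * R j ω + Φ j rr) := by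
      cases hnull : isNull j
      · refine ⟨ρ j, α, (hρ j).1, hcondAlt j hj hnull rr, ?_, ?_⟩
        · exact le_trans (hΨ j rr).2 (min_le_left _ _)
        · intro ω hω
          have hupd := hWupd j hj rr ω hω
          simp only [hf]
          rw [hupd, hV j ω, hnull]
          simp only [if_neg Bool.false_ne_true]
          ring
      · refine ⟨A j rr, α - 1, (hA j rr).1, hcondNull j hj hnull rr, ?_, ?_⟩
        · have := le_trans (hΨ j rr).2 (min_le_right _ _)
          linarith
        · intro ω hω
          have hupd := hWupd j hj rr ω hω
          simp only [hf]
          rw [hupd, hV j ω, hnull]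
          simp only [if_true]
          ring
    have hcongr : ∫ ω in E v, f j ω ∂μ =
        ∫ ω in E v, ((α' - Ψ j rr) * R j ω + Φ j rr) ∂μ :=
      setIntegral_congr_fun (hEmeas v) hfeq
    rw [hcongr, integral_add (((hRint j).integrableOn).const_mul _)
      (integrableOn_const (measure_lt_top μ _).ne),
      integral_const_mul, hintR, setIntegral_const, smul_eq_mul, measureReal_def, ← hmE]
    have hm : m1 ≤ κ * mE := by
      have hne : ENNReal.ofReal κ * μ (E v) ≠ ⊤ :=
        ENNReal.mul_ne_top ENNReal.ofReal_ne_top hμEfin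
      have := ENNReal.toReal_mono hne hμle
      rwa [ENNReal.toReal_mul, ENNReal.toReal_ofReal hκ0.le] at this
    have := key_ineq κ (Φ j rr) (Ψ j rr) α' m1 mE hκ0 (hΦ j rr) hψle hm1nn hm
    linarith
  -- telescoping and conclusion
  intro m
  have htel : ∀ ω, ∑ j ∈ Finset.Icc 1 m, (W (j - 1) ω - W j ω) = W 0 ω - W m ω := by
    intro ω
    induction m with
    | zero => simp
    | succ n ih =>
      rw [Finset.sum_Icc_succ_top (by omega : 1 ≤ n + 1), ih]
      simp only [Nat.add_sub_cancel]
      ring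
  have hsum : 0 ≤ ∑ j ∈ Finset.Icc 1 m, ∫ ω, f j ω ∂μ :=
    Finset.sum_nonneg fun j hj => hstep j (Finset.mem_Icc.mp hj).1
  rw [← integral_finset_sum _ (fun j _ => hfint j)] at hsum
  have hXeq : (fun ω => ∑ j ∈ Finset.Icc 1 m, f j ω) =
      fun ω => (α * (∑ i ∈ Finset.Icc 1 m, R i ω) - (∑ i ∈ Finset.Icc 1 m, V i ω))
        + (W 0 ω - W m ω) := by
    funext ω
    rw [← htel ω, Finset.mul_sum, ← Finset.sum_sub_distrib, ← Finset.sum_add_distrib]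
  rw [hXeq] at hsum
  have hSRint : Integrable (fun ω => ∑ i ∈ Finset.Icc 1 m, R i ω) μ :=
    integrable_finset_sum _ fun i _ => hRint i
  have hSVint : Integrable (fun ω => ∑ i ∈ Finset.Icc 1 m, V i ω) μ :=
    integrable_finset_sum _ fun i _ => hVint i
  have h1 : Integrable (fun ω => α * (∑ i ∈ Finset.Icc 1 m, R i ω)
      - ∑ i ∈ Finset.Icc 1 m, V i ω) μ := (hSRint.const_mul α).sub hSVint
  have h2 : Integrable (fun ω => W 0 ω - W m ω) μ := (hWint 0).sub (hWint m)
  rw [integral_add h1 h2, integral_sub (hSRint.const_mul α) hSVint, integral_const_mul,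
    integral_sub (hWint 0) (hWint m)] at hsum
  have hW0int : ∫ ω, W 0 ω ∂μ = α * η := by
    have : (fun ω => W 0 ω) = fun _ => α * η := funext hW0
    rw [this, integral_const]
    simp
  have hWmnn : 0 ≤ ∫ ω, W m ω ∂μ := integral_nonneg fun ω => hWnn m ω
  rw [hW0int] at hsum
  set IR := ∫ ω, (∑ i ∈ Finset.Icc 1 m, R i ω) ∂μ with hIR
  set IV := ∫ ω, (∑ i ∈ Finset.Icc 1 m, V i ω) ∂μ with hIV
  have hIRnn : 0 ≤ IR :=
    integral_nonneg fun ω => Finset.sum_nonneg fun i _ => hRnn i ω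
  have hdenom : 0 < IR + η := by linarith
  rw [div_le_iff₀ hdenom]
  linarith
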